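/- Let n ≥ 1 be a natural number. Then for all x > 0, v(f_n)(x) = (n/x²)·f_n(x)² + 2n(n+1)·x^{2n} · ∫_0^x f_n(t)²/t^{2n+3} dt, and consequently v(f_n)(x) > 0 for all x > 0. -/

import Mathlib

open intervalIntegral Real Set Filter Topology MeasureTheory

/-- v h = (deriv h)^2 - (second derivative of h) * h. -/
noncomputable def v (f : ℝ → ℝ) (x : ℝ) : ℝ := (deriv f x) ^ 2 - deriv^[2] f x * f x

/-- `fn n x = √(π/2)·x^(n+1/2)·J_(n+1/2)(x)`, via the equivalent recursive definition
`fn 0 = sin`, `fn (n+1) x = ∫_0^x t·fn n t dt`. -/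
noncomputable def fn : ℕ → ℝ → ℝ
  | 0 => fun x => Real.sin x
  | n + 1 => fun x => ∫ t in (0:ℝ)..x, t * fn n t

lemma fn_zero_def (x : ℝ) : fn 0 x = Real.sin x := rfl

lemma fn_succ (n : ℕ) (x : ℝ) : fn (n+1) x = ∫ t in (0:ℝ)..x, t * fn n t := rfl

lemma fn_succ_zero (n : ℕ) : fn (n+1) 0 = 0 := by simp [fn_succ]

lemma fn_aux : ∀ n : ℕ, Continuous (fn n) ∧ ∀ x, HasDerivAt (fn (n+1)) (x * fn n x) x := by
  intro n
  induction n with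
  | zero =>
    refine ⟨Real.continuous_sin, fun x => ?_⟩
    exact ((continuous_id.mul Real.continuous_sin).integral_hasStrictDerivAt 0 x).hasDerivAt
  | succ m ih =>
    have hc : Continuous (fn (m+1)) := by
      rw [continuous_iff_continuousAt]
      exact fun x => (ih.2 x).continuousAt
    exact ⟨hc, fun x => ((continuous_id.mul hc).integral_hasStrictDerivAt 0 x).hasDerivAt⟩

lemma continuous_fn (n : ℕ) : Continuous (fn n) := (fn_aux n).1

lemma hasDerivAt_fn (n : ℕ) (x : ℝ) : HasDerivAt (fn (n+1)) (x * fn n x) x := (fn_aux n).2 x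

lemma fn_one (x : ℝ) : fn 1 x = Real.sin x - x * Real.cos x := by
  rw [fn_succ]
  have h : ∀ t ∈ Set.uIcc (0:ℝ) x,
      HasDerivAt (fun y => Real.sin y - y * Real.cos y) (t * fn 0 t) t := by
    intro t _
    have := (Real.hasDerivAt_sin t).sub ((hasDerivAt_id t).mul (Real.hasDerivAt_cos t))
    refine this.congr_deriv (Eq.symm ?_)
    simp only [fn_zero_def, id_eq]
    ring
  rw [intervalIntegral.integral_eq_sub_of_hasDerivAt h
    ((continuous_id.mul (continuous_fn 0)).intervalIntegrable 0 x)]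
  simp

lemma fn_two (x : ℝ) : fn 2 x = 3 * Real.sin x - 3 * x * Real.cos x - x^2 * Real.sin x := by
  rw [fn_succ]
  have h : ∀ t ∈ Set.uIcc (0:ℝ) x,
      HasDerivAt (fun y => 3 * Real.sin y - 3 * y * Real.cos y - y^2 * Real.sin y)
        (t * fn 1 t) t := by
    intro t _
    have h1 : HasDerivAt (fun y : ℝ => 3 * Real.sin y) (3 * Real.cos t) t :=
      (Real.hasDerivAt_sin t).const_mul 3
    have h2 : HasDerivAt (fun y : ℝ => 3 * y * Real.cos y)
        (3 * Real.cos t + 3 * t * (-Real.sin t)) t := by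
      have := (((hasDerivAt_id t).const_mul (3:ℝ)).mul (Real.hasDerivAt_cos t))
      refine this.congr_deriv (Eq.symm ?_)
      simp only [id_eq]
      ring
    have h3 : HasDerivAt (fun y : ℝ => y^2 * Real.sin y)
        (2 * t * Real.sin t + t^2 * Real.cos t) t := by
      have := (hasDerivAt_pow 2 t).mul (Real.hasDerivAt_sin t)
      refine this.congr_deriv (Eq.symm ?_)
      ring
    have := (h1.sub h2).sub h3
    refine this.congr_deriv (Eq.symm ?_)
    rw [fn_one]; ring
  rw [intervalIntegral.integral_eq_sub_of_hasDerivAt h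
    ((continuous_id.mul (continuous_fn 1)).intervalIntegrable 0 x)]
  simp

lemma fn_rec : ∀ (n : ℕ) (x : ℝ), fn (n+2) x = (2*(n:ℝ)+3) * fn (n+1) x - x^2 * fn n x := by
  intro n
  induction n with
  | zero =>
    intro x
    rw [fn_two, fn_one, fn_zero_def]
    push_cast
    ring
  | succ m ih =>
    have key : ∀ x, HasDerivAt
        (fun x => fn (m+3) x - ((2*(m:ℝ)+5) * fn (m+2) x - x^2 * fn (m+1) x)) 0 x := by
      intro x
      have h1 := hasDerivAt_fn (m+2) x
      have h2 := (hasDerivAt_fn (m+1) x).const_mul (2*(m:ℝ)+5)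
      have h3 : HasDerivAt (fun y => y^2 * fn (m+1) y)
          (2*x*fn (m+1) x + x^2 * (x * fn m x)) x := by
        have := (hasDerivAt_pow 2 x).mul (hasDerivAt_fn m x)
        refine this.congr_deriv (Eq.symm ?_)
        ring
      have := h1.sub (h2.sub h3)
      refine this.congr_deriv (Eq.symm ?_)
      have hx := ih x
      push_cast at hx ⊢
      linear_combination -x * hx
    have hconst := is_const_of_deriv_eq_zero
      (fun x => (key x).differentiableAt) (fun x => (key x).deriv)
    intro x
    have := hconst x 0
    rw [fn_succ_zero, fn_succ_zero, fn_succ_zero] at this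
    push_cast at this ⊢
    linarith [this]

lemma hasDerivAt_w (n : ℕ) (x : ℝ) :
    HasDerivAt (fun y => y * fn n y) ((2*(n:ℝ)+2) * fn n x - fn (n+1) x) x := by
  cases n with
  | zero =>
    have := (hasDerivAt_id x).mul (Real.hasDerivAt_sin x)
    refine this.congr_deriv (Eq.symm ?_)
    rw [fn_one]
    simp only [fn_zero_def, id_eq]
    push_cast
    ring
  | succ m =>
    have := (hasDerivAt_id x).mul (hasDerivAt_fn m x)
    refine this.congr_deriv (Eq.symm ?_)
    have hx := fn_rec m x
    simp only [id_eq]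
    push_cast at hx ⊢
    linear_combination -hx

lemma deriv_fn_eq (n : ℕ) : deriv (fn (n+1)) = fun x => x * fn n x :=
  funext fun x => (hasDerivAt_fn n x).deriv

lemma deriv2_fn (n : ℕ) (x : ℝ) :
    deriv^[2] (fn (n+1)) x = (2*(n:ℝ)+2) * fn n x - fn (n+1) x := by
  have : deriv^[2] (fn (n+1)) = deriv (deriv (fn (n+1))) := rfl
  rw [this, deriv_fn_eq]
  exact (hasDerivAt_w n x).deriv

lemma v_fn_eq (n : ℕ) (x : ℝ) :
    v (fn (n+1)) x = (x * fn n x)^2 - ((2*(n:ℝ)+2) * fn n x - fn (n+1) x) * fn (n+1) x := by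
  unfold v
  rw [deriv2_fn, deriv_fn_eq]

lemma fn_abs_le : ∀ (n : ℕ) (t : ℝ), 0 ≤ t → |fn n t| ≤ t^(2*n+1) := by
  intro n
  induction n with
  | zero =>
    intro t ht
    simpa [fn_zero_def, abs_of_nonneg ht] using Real.abs_sin_le_abs (x := t)
  | succ m ih =>
    intro t ht
    rw [fn_succ]
    have hb : ∀ s ∈ Set.uIoc (0:ℝ) t, ‖s * fn m s‖ ≤ t^(2*m+2) := by
      intro s hs
      rw [Set.uIoc_of_le ht] at hs
      have hs0 : 0 < s := hs.1
      have hst : s ≤ t := hs.2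
      rw [Real.norm_eq_abs, abs_mul, abs_of_pos hs0]
      calc s * |fn m s| ≤ s * s^(2*m+1) := by
            exact mul_le_mul_of_nonneg_left (ih s hs0.le) hs0.le
        _ = s^(2*m+2) := by ring
        _ ≤ t^(2*m+2) := pow_le_pow_left₀ hs0.le hst _
    have := intervalIntegral.norm_integral_le_of_norm_le_const hb
    rw [Real.norm_eq_abs] at this
    calc |∫ s in (0:ℝ)..t, s * fn m s| ≤ t^(2*m+2) * |t - 0| := this
      _ = t^(2*(m+1)+1) := by rw [sub_zero, abs_of_nonneg ht]; ring

lemma fn_lb : ∀ n : ℕ, ∃ c : ℝ, 0 < c ∧ ∀ t : ℝ, 0 < t → t ≤ 1 → c * t^(2*n+1) ≤ fn n t := by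
  intro n
  induction n with
  | zero =>
    refine ⟨1/2, by norm_num, fun t ht ht1 => ?_⟩
    have := Real.sin_gt_sub_cube ht
    rw [fn_zero_def]
    nlinarith [pow_le_one₀ ht.le ht1 (n := 3), sq_nonneg t]
  | succ m ih =>
    obtain ⟨c, hc, hcb⟩ := ih
    refine ⟨c/(2*m+3), by positivity, fun t ht ht1 => ?_⟩
    rw [fn_succ]
    have hmono : ∫ s in (0:ℝ)..t, c * s^(2*m+2) ≤ ∫ s in (0:ℝ)..t, s * fn m s := by
      apply intervalIntegral.integral_mono_on ht.le
      · exact ((continuous_const.mul (continuous_pow _)).intervalIntegrable 0 t)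
      · exact ((continuous_id.mul (continuous_fn m)).intervalIntegrable 0 t)
      · intro s hs
        rcases eq_or_lt_of_le hs.1 with h0 | h0
        · simp [← h0]
        · have := hcb s h0 (hs.2.trans ht1)
          calc c * s^(2*m+2) = s * (c * s^(2*m+1)) := by ring
            _ ≤ s * fn m s := mul_le_mul_of_nonneg_left this h0.le
    have hval : ∫ s in (0:ℝ)..t, c * s^(2*m+2) = c * t^(2*m+3) / (2*m+3) := by
      rw [intervalIntegral.integral_const_mul, integral_pow]
      push_cast
      ring
    calc c/(2*(m:ℝ)+3) * t^(2*(m+1)+1) = c * t^(2*m+3) / (2*m+3) := by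
          push_cast; ring
      _ ≤ _ := hval ▸ hmono

noncomputable def Gm (m : ℕ) (t : ℝ) : ℝ :=
  ((t * fn m t)^2 - (2*((m:ℝ)+1)*(t * fn m t)/t - fn (m+1) t) * fn (m+1) t)/t^(2*m+2)
    - ((m:ℝ)+1) * (fn (m+1) t)^2 / t^(2*m+4)

lemma Gm_zero (m : ℕ) : Gm m 0 = 0 := by
  simp [Gm, fn_succ_zero]

lemma hasDerivAt_Gm (m : ℕ) {t : ℝ} (ht : 0 < t) :
    HasDerivAt (Gm m) (2*((m:ℝ)+1)*((m:ℝ)+2)*(fn (m+1) t)^2/t^(2*m+5)) t := by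
  set N : ℝ := (m:ℝ)+1 with hN
  have hW : HasDerivAt (fun y => y * fn m y) (2*N*fn m t - fn (m+1) t) t := by
    have := hasDerivAt_w m t
    convert this using 2
    rw [hN]; ring
  have hU : HasDerivAt (fn (m+1)) (t * fn m t) t := hasDerivAt_fn m t
  have hsq := hW.pow 2
  have hdiv := (hW.const_mul (2*N)).div (hasDerivAt_id t) ht.ne'
  have hterm := (hdiv.sub hU).mul hU
  have hnum1 := hsq.sub hterm
  have hpow1 : (t:ℝ)^(2*m+2) ≠ 0 := pow_ne_zero _ ht.ne'
  have hpow2 : (t:ℝ)^(2*m+4) ≠ 0 := pow_ne_zero _ ht.ne'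
  have hfrac1 := hnum1.div (hasDerivAt_pow (2*m+2) t) hpow1
  have hfrac2 := ((hU.pow 2).const_mul N).div (hasDerivAt_pow (2*m+4) t) hpow2
  have htot := hfrac1.sub hfrac2
  refine htot.congr_deriv (Eq.symm ?_)
  simp only [id_eq, Nat.add_sub_cancel, Nat.cast_ofNat, Nat.cast_add, Nat.cast_mul, Pi.sub_apply, Pi.mul_apply, Pi.div_apply, Pi.pow_apply, id, show 2*m+2-1 = 2*m+1 by omega, show 2*m+4-1 = 2*m+3 by omega]
  rw [hN]
  field_simp
  ring

lemma psi_abs_le (m : ℕ) {t : ℝ} (ht : 0 ≤ t) :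
    |(fn (m+1) t)^2 / t^(2*m+5)| ≤ t^(2*m+1) := by
  rcases eq_or_lt_of_le ht with h0 | h0
  · simp [← h0, fn_succ_zero]
  · rw [abs_div, abs_of_pos (pow_pos h0 _), div_le_iff₀ (pow_pos h0 _)]
    have h1 : |(fn (m+1) t)^2| = |fn (m+1) t|^2 := by rw [abs_pow]
    rw [h1]
    calc |fn (m+1) t|^2 ≤ (t^(2*(m+1)+1))^2 := by
          apply pow_le_pow_left₀ (abs_nonneg _) (fn_abs_le (m+1) t ht)
      _ = t^(2*m+1) * t^(2*m+5) := by ring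
      _ ≤ _ := le_refl _

lemma psi_contOn (m : ℕ) (x : ℝ) :
    ContinuousOn (fun t => (fn (m+1) t)^2 / t^(2*m+5)) (Icc 0 x) := by
  intro t ht
  rcases eq_or_lt_of_le ht.1 with h0 | h0
  · rw [← h0]
    have h2 : Tendsto (fun t => (fn (m+1) t)^2 / t^(2*m+5)) (𝓝[Icc 0 x] 0) (𝓝 0) := by
      apply squeeze_zero_norm' (a := fun t => t^(2*m+1))
      · filter_upwards [self_mem_nhdsWithin] with s hs
        exact psi_abs_le m hs.1
      · have : Tendsto (fun t : ℝ => t^(2*m+1)) (𝓝 0) (𝓝 ((0:ℝ)^(2*m+1))) :=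
          (continuous_pow _).tendsto 0
        rw [zero_pow (by omega)] at this
        exact this.mono_left nhdsWithin_le_nhds
    have hval : (fn (m+1) (0:ℝ))^2 / (0:ℝ)^(2*m+5) = 0 := by simp [fn_succ_zero]
    unfold ContinuousWithinAt
    simpa [hval] using h2
  · exact (((continuous_fn (m+1)).pow 2).continuousAt.div
      ((continuous_pow _).continuousAt) (pow_ne_zero _ h0.ne')).continuousWithinAt

lemma Gm_abs_le (m : ℕ) {t : ℝ} (ht : 0 ≤ t) (ht1 : t ≤ 1) :
    |Gm m t| ≤ (3*(m:ℝ)+5) * t^(2*m+2) := by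
  rcases eq_or_lt_of_le ht with h0 | h0
  · rw [← h0, Gm_zero]
    simp
  · set N : ℝ := (m:ℝ)+1 with hN
    set A := fn m t with hA
    set U := fn (m+1) t with hU
    have hG : Gm m t = ((t * A)^2 * t^2 - 2*N*(t * A)*U*t + U^2 * t^2 - N * U^2)/t^(2*m+4) := by
      rw [Gm]
      field_simp
      try ring
    have hA' : |A| ≤ t^(2*m+1) := fn_abs_le m t ht
    have hU' : |U| ≤ t^(2*m+3) := by
      have := fn_abs_le (m+1) t ht
      convert this using 2
      try omega
    have hNpos : (0:ℝ) < N := by rw [hN]; positivity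
    rw [hG, abs_div, abs_of_pos (pow_pos h0 _), div_le_iff₀ (pow_pos h0 _)]
    have b1 : |(t * A)^2 * t^2| ≤ t^(4*m+6) := by
      have h : |(t * A)^2 * t^2| = (t * |A|)^2 * t^2 := by
        simp [abs_mul, abs_pow, abs_of_pos h0]
      rw [h]
      calc (t * |A|)^2 * t^2 ≤ (t * t^(2*m+1))^2 * t^2 := by gcongr
        _ = t^(4*m+6) := by ring
    have b2 : |2*N*(t * A)*U*t| ≤ 2*N*t^(4*m+6) := by
      have h : |2*N*(t * A)*U*t| = 2*N*(t * |A|) * |U| * t := by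
        simp [abs_mul, abs_of_pos h0, abs_of_pos hNpos]
        try ring
      rw [h]
      calc 2*N*(t * |A|) * |U| * t ≤ 2*N*(t * t^(2*m+1)) * t^(2*m+3) * t := by gcongr
        _ = 2*N*t^(4*m+6) := by ring
    have b3 : |U^2 * t^2| ≤ t^(4*m+6) := by
      have h : |U^2 * t^2| = |U|^2 * t^2 := by
        simp [abs_mul, abs_pow, abs_of_pos h0]
      rw [h]
      calc |U|^2 * t^2 ≤ (t^(2*m+3))^2 * t^2 := by gcongr
        _ = t^(4*m+8) := by ring
        _ ≤ t^(4*m+6) := pow_le_pow_of_le_one ht ht1 (by omega)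
    have b4 : |N * U^2| ≤ N * t^(4*m+6) := by
      have h : |N * U^2| = N * |U|^2 := by
        simp [abs_mul, abs_pow, abs_of_pos hNpos]
      rw [h]
      calc N * |U|^2 ≤ N * (t^(2*m+3))^2 := by gcongr
        _ = N * t^(4*m+6) := by ring
    calc |(t * A)^2 * t^2 - 2*N*(t * A)*U*t + U^2 * t^2 - N * U^2|
        ≤ |(t * A)^2 * t^2 - 2*N*(t * A)*U*t + U^2 * t^2| + |N * U^2| := abs_sub _ _
      _ ≤ (|(t * A)^2 * t^2 - 2*N*(t * A)*U*t| + |U^2 * t^2|) + |N * U^2| := by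
          gcongr
          exact abs_add_le _ _
      _ ≤ ((|(t * A)^2 * t^2| + |2*N*(t * A)*U*t|) + |U^2 * t^2|) + |N * U^2| := by
          gcongr
          exact abs_sub _ _
      _ ≤ ((t^(4*m+6) + 2*N*t^(4*m+6)) + t^(4*m+6)) + N*t^(4*m+6) := by
          gcongr
      _ = (3*(m:ℝ)+5) * t^(2*m+2) * t^(2*m+4) := by
          rw [hN]; ring

lemma Gm_contOn (m : ℕ) (x : ℝ) : ContinuousOn (Gm m) (Icc 0 x) := by
  intro t ht
  rcases eq_or_lt_of_le ht.1 with h0 | h0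
  · rw [← h0]
    have h2 : Tendsto (Gm m) (𝓝[Icc 0 x] 0) (𝓝 0) := by
      apply squeeze_zero_norm' (a := fun t => (3*(m:ℝ)+5) * t^(2*m+2))
      · have h1 : ∀ᶠ s in 𝓝[Icc 0 x] (0:ℝ), |s| < 1 := by
          apply Filter.Eventually.filter_mono nhdsWithin_le_nhds
          have := eventually_abs_sub_lt (0:ℝ) one_pos
          simpa using this
        filter_upwards [h1, self_mem_nhdsWithin] with s hs1 hs2
        exact Gm_abs_le m hs2.1 ((le_abs_self s).trans hs1.le)
      · have : Tendsto (fun t : ℝ => (3*(m:ℝ)+5) * t^(2*m+2)) (𝓝 0)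
            (𝓝 ((3*(m:ℝ)+5) * (0:ℝ)^(2*m+2))) :=
          (continuous_const.mul (continuous_pow _)).tendsto 0
        rw [zero_pow (by omega), mul_zero] at this
        exact this.mono_left nhdsWithin_le_nhds
    unfold ContinuousWithinAt
    rwa [Gm_zero]
  · exact (hasDerivAt_Gm m h0).continuousAt.continuousWithinAt

theorem stmt_3 (n : ℕ) (hn : 1 ≤ n) :
    ∀ x > (0 : ℝ),
      (v (fn n) x = (n : ℝ) / x ^ 2 * (fn n x) ^ 2 +
        2 * (n : ℝ) * ((n : ℝ) + 1) * x ^ (2 * n) *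
          ∫ t in (0:ℝ)..x, (fn n t) ^ 2 / t ^ (2 * n + 3)) ∧
      0 < v (fn n) x := by
  obtain ⟨m, rfl⟩ : ∃ m, n = m + 1 := ⟨n - 1, by omega⟩
  intro x hx
  set N : ℝ := (m:ℝ)+1 with hN
  have hexp : 2 * (m+1) + 3 = 2*m+5 := by omega
  have hexp2 : 2 * (m+1) = 2*m+2 := by omega
  -- FTC for Gm on [0, x]
  set ψ : ℝ → ℝ := fun t => (fn (m+1) t)^2 / t^(2*m+5) with hψ
  have hpsi_cont : ContinuousOn ψ (uIcc 0 x) := by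
    rw [uIcc_of_le hx.le]; exact psi_contOn m x
  have hφcont : ContinuousOn (fun t => 2*((m:ℝ)+1)*((m:ℝ)+2)*(fn (m+1) t)^2/t^(2*m+5))
      (uIcc 0 x) := by
    have := hpsi_cont.const_smul (2*((m:ℝ)+1)*((m:ℝ)+2))
    apply this.congr
    intro t _
    simp [hψ, smul_eq_mul]
    ring
  have hint : IntervalIntegrable (fun t => 2*((m:ℝ)+1)*((m:ℝ)+2)*(fn (m+1) t)^2/t^(2*m+5))
      volume 0 x := hφcont.intervalIntegrable
  have hftc : (∫ t in (0:ℝ)..x, 2*((m:ℝ)+1)*((m:ℝ)+2)*(fn (m+1) t)^2/t^(2*m+5))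
      = Gm m x - Gm m 0 := by
    apply intervalIntegral.integral_eq_sub_of_hasDeriv_right
    · rw [uIcc_of_le hx.le]; exact Gm_contOn m x
    · intro t ht
      rw [min_eq_left hx.le, max_eq_right hx.le] at ht
      exact (hasDerivAt_Gm m ht.1).hasDerivWithinAt
    · exact hint
  rw [Gm_zero, sub_zero] at hftc
  have hIeq : (∫ t in (0:ℝ)..x, 2*((m:ℝ)+1)*((m:ℝ)+2)*(fn (m+1) t)^2/t^(2*m+5))
      = 2*((m:ℝ)+1)*((m:ℝ)+2) * ∫ t in (0:ℝ)..x, ψ t := by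
    rw [← intervalIntegral.integral_const_mul]
    apply intervalIntegral.integral_congr
    intro t _
    simp [hψ]
    ring
  set I : ℝ := ∫ t in (0:ℝ)..x, ψ t with hI
  have key : 2*((m:ℝ)+1)*((m:ℝ)+2) * I = Gm m x := by rw [← hIeq, hftc]
  have key2 : x^(2*m+2) * Gm m x
      = v (fn (m+1)) x - ((m:ℝ)+1)/x^2*(fn (m+1) x)^2 := by
    rw [v_fn_eq, Gm]
    field_simp
    ring
  have hIpos : 0 < I := by
    obtain ⟨c, hc, hcb⟩ := fn_lb (m+1)
    set s : ℝ := min x 1 with hs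
    have hs0 : 0 < s := lt_min hx one_pos
    have hsx : s ≤ x := min_le_left _ _
    have hs1 : s ≤ 1 := min_le_right _ _
    have hint0x : IntervalIntegrable ψ volume 0 x := hpsi_cont.intervalIntegrable
    have hsub1 : Set.uIcc (0:ℝ) s ⊆ Set.uIcc (0:ℝ) x := by
      apply uIcc_subset_uIcc left_mem_uIcc
      rw [uIcc_of_le hx.le]; exact ⟨hs0.le, hsx⟩
    have hsub2 : Set.uIcc s x ⊆ Set.uIcc (0:ℝ) x := by
      apply uIcc_subset_uIcc _ right_mem_uIcc
      rw [uIcc_of_le hx.le]; exact ⟨hs0.le, hsx⟩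
    have hint0s : IntervalIntegrable ψ volume 0 s := hint0x.mono_set hsub1
    have hintsx : IntervalIntegrable ψ volume s x := hint0x.mono_set hsub2
    have hsplit : I = (∫ t in (0:ℝ)..s, ψ t) + ∫ t in s..x, ψ t :=
      (intervalIntegral.integral_add_adjacent_intervals hint0s hintsx).symm
    have hpart2 : 0 ≤ ∫ t in s..x, ψ t := by
      apply intervalIntegral.integral_nonneg hsx
      intro t ht
      have ht0 : 0 < t := lt_of_lt_of_le hs0 ht.1
      exact div_nonneg (sq_nonneg _) (pow_pos ht0 _).le
    have hpart1 : c^2 * s^(2*m+2) / (2*m+2) ≤ ∫ t in (0:ℝ)..s, ψ t := by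
      have hmono : ∫ t in (0:ℝ)..s, c^2 * t^(2*m+1) ≤ ∫ t in (0:ℝ)..s, ψ t := by
        apply intervalIntegral.integral_mono_on hs0.le
        · exact (continuous_const.mul (continuous_pow _)).intervalIntegrable 0 s
        · exact hint0s
        · intro t ht
          rcases eq_or_lt_of_le ht.1 with h0 | h0
          · simp [hψ, ← h0, fn_succ_zero]
          · have hlb := hcb t h0 (ht.2.trans hs1)
            have h1 : c^2 * t^(2*m+1) = (c * t^(2*(m+1)+1))^2 / t^(2*m+5) := by
              rw [eq_div_iff (pow_ne_zero _ h0.ne')]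
              ring
            rw [h1]
            show _ ≤ fn (m+1) t ^ 2 / t^(2*m+5)
            gcongr
            all_goals first | positivity | exact hlb
      have hval : ∫ t in (0:ℝ)..s, c^2 * t^(2*m+1) = c^2 * s^(2*m+2) / (2*m+2) := by
        rw [intervalIntegral.integral_const_mul, integral_pow]
        push_cast
        ring
      rw [← hval]
      exact hmono
    have : 0 < c^2 * s^(2*m+2) / (2*m+2) := by positivity
    rw [hsplit]
    linarith
  constructor
  · rw [hexp, hexp2]
    push_cast
    have expand : N/x^2*(fn (m+1) x)^2 + 2*N*(N+1)*x^(2*m+2) * I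
        = N/x^2*(fn (m+1) x)^2 + x^(2*m+2)*(2*((m:ℝ)+1)*((m:ℝ)+2) * I) := by
      rw [hN]; ring
    rw [show ((m:ℝ)+1) = N from rfl]
    rw [expand, key, key2, hN]
    ring
  · have hv : v (fn (m+1)) x = N/x^2*(fn (m+1) x)^2 + x^(2*m+2)*(2*((m:ℝ)+1)*((m:ℝ)+2)*I) := by
      rw [key, key2, hN]; ring
    rw [hv]
    have h1 : 0 ≤ N/x^2*(fn (m+1) x)^2 := by positivity
    have h2 : 0 < x^(2*m+2)*(2*((m:ℝ)+1)*((m:ℝ)+2)*I) := by positivity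
    linarith
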